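/- Let 0 < α ≤ 2, d ≥ 1, and suppose a_z ‖z‖^{d+α} → 1 as ‖z‖ → ∞ (z ∈ ℤ^d \ {0}, a_z ≥ 0). Then F(θ)/F_d(θ) → 1 as θ → 0, where F(θ) = ∑_{z≠0} a_z (1 − cos⟨z,θ⟩) and F_d(θ) = ∑_{z≠0} ‖z‖^{−(d+α)}(1 − cos⟨z,θ⟩). -/

import Mathlib

set_option maxHeartbeats 1000000

open Real Filter

/-- The summand of the series `F_d`. -/
noncomputable def FdTerm (d : ℕ) (α : ℝ) (z : Fin d → ℤ) (θ : Fin d → ℝ) : ℝ :=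
  if z = 0 then 0
  else ‖z‖ ^ (-((d : ℝ) + α)) * (1 - Real.cos (∑ i, (z i : ℝ) * θ i))

lemma one_sub_cos_le (x : ℝ) : 1 - Real.cos x ≤ x ^ 2 / 2 := by
  have := Real.one_sub_sq_div_two_le_cos (x := x); linarith

lemma sq_div_five_le_one_sub_cos {x : ℝ} (h : |x| ≤ 1) : x ^ 2 / 5 ≤ 1 - Real.cos x := by
  have hπ : |x| ≤ π := h.trans (by linarith [Real.two_le_pi])
  have h2 := Real.cos_le_one_sub_mul_cos_sq hπ
  have hπ2 : π ^ 2 ≤ 10 := by nlinarith [Real.pi_lt_d2, Real.pi_pos]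
  have hx2 : (0:ℝ) ≤ x ^ 2 := sq_nonneg x
  have : (1:ℝ)/5 ≤ 2 / π ^ 2 := by
    rw [div_le_div_iff₀ (by norm_num) (by positivity)]; nlinarith
  nlinarith

lemma norm_int_vec_coord_le {d : ℕ} (z : Fin d → ℤ) (i : Fin d) : |(z i : ℝ)| ≤ ‖z‖ := by
  simpa [Int.norm_eq_abs] using norm_le_pi_norm z i

lemma one_le_norm_int_vec {d : ℕ} {z : Fin d → ℤ} (hz : z ≠ 0) : 1 ≤ ‖z‖ := by
  obtain ⟨i, hi⟩ := Function.ne_iff.mp hz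
  have h1 : (1:ℝ) ≤ |(z i : ℝ)| := by
    have := Int.one_le_abs (by simpa using hi)
    exact_mod_cast (by exact_mod_cast this : (1:ℝ) ≤ ((|z i| : ℤ) : ℝ))
  exact h1.trans (norm_int_vec_coord_le z i)

lemma norm_int_vec_le {d : ℕ} (z : Fin d → ℤ) (N : ℕ) (h : ∀ i, |z i| ≤ (N : ℤ)) :
    ‖z‖ ≤ (N : ℝ) := by
  refine pi_norm_le_iff_of_nonneg (by positivity) |>.mpr fun i => ?_
  rw [Int.norm_eq_abs]
  exact_mod_cast h i

lemma FdTerm_nonneg (d : ℕ) (α : ℝ) (z : Fin d → ℤ) (θ : Fin d → ℝ) :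
    0 ≤ FdTerm d α z θ := by
  unfold FdTerm
  split
  · exact le_refl 0
  · exact mul_nonneg (Real.rpow_nonneg (norm_nonneg _) _)
      (by linarith [Real.cos_le_one (∑ i, (z i : ℝ) * θ i)])

lemma Fd_lower (d : ℕ) (hd : 1 ≤ d) (α : ℝ) (hα0 : 0 < α) (hα2 : α ≤ 2)
    (hsum : ∀ θ : Fin d → ℝ, Summable (fun z => FdTerm d α z θ))
    (K : ℝ) (hK : 0 < K) :
    ∃ δ > 0, ∀ θ : Fin d → ℝ, θ ≠ 0 → ‖θ‖ < δ →
      K * ‖θ‖ ^ 2 ≤ ∑' z, FdTerm d α z θ := by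
  haveI : NeZero d := ⟨by omega⟩
  -- choose N₀ from harmonic series divergence
  obtain ⟨N₀, hN₀⟩ := (tendsto_sum_range_one_div_nat_succ_atTop.eventually_ge_atTop
    (5 / 2 * K)).exists_forall_of_atTop
  refine ⟨1 / (2 * (N₀ + 1)), by positivity, fun θ hθ hθδ => ?_⟩
  set t := ‖θ‖ with htdef
  have ht : 0 < t := norm_pos_iff.mpr hθ
  set N : ℕ := ⌊1 / (2 * t)⌋₊ with hNdef
  have hNle : (N : ℝ) ≤ 1 / (2 * t) := Nat.floor_le (by positivity)
  have hNt : (N : ℝ) * t ≤ 1 / 2 := by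
    rw [le_div_iff₀ (by positivity)] at hNle
    linarith
  have hN₀N : N₀ ≤ N := by
    have h1 : ((N₀ + 1 : ℕ) : ℝ) ≤ 1 / (2 * t) := by
      rw [le_div_iff₀ (by positivity)]
      rw [lt_div_iff₀ (by positivity)] at hθδ
      push_cast
      nlinarith
    have := Nat.le_floor h1
    omega
  have hN1 : 1 ≤ N := by
    have h1 : ((N₀ + 1 : ℕ) : ℝ) ≤ 1 / (2 * t) := by
      rw [le_div_iff₀ (by positivity)]
      rw [lt_div_iff₀ (by positivity)] at hθδ
      push_cast
      nlinarith
    have := Nat.le_floor h1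
    omega
  -- the coordinate of maximal absolute value
  obtain ⟨j, -, hj⟩ := Finset.exists_mem_eq_sup (Finset.univ : Finset (Fin d))
    Finset.univ_nonempty (fun i => ‖θ i‖₊)
  have hjt : |θ j| = t := by
    have : ‖θ‖ = ‖θ j‖ := by
      rw [Pi.norm_def, hj]
      simp
    rw [htdef, this, Real.norm_eq_abs]
  set r : ℝ := (d:ℝ) + α with hrdef
  set g : (Fin d → ℤ) → ℝ := fun z => FdTerm d α z θ with hgdef
  set σ : (Fin d → ℤ) → (Fin d → ℤ) := fun z i => if i = j then -(z i) else z i with hσdef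
  have hσσ : ∀ z, σ (σ z) = z := by
    intro z; funext i
    simp only [hσdef]
    split <;> simp
  have hσinj : Function.Injective σ := Function.Involutive.injective hσσ
  set c : (Fin d → ℤ) → ℝ := fun z => ∑ i ∈ Finset.univ.erase j, (z i : ℝ) * θ i with hcdef
  set Sk : ℕ → Finset (Fin d → ℤ) := fun k =>
    Fintype.piFinset (fun i => if i = j then {(k:ℤ)} else Finset.Icc (-(k:ℤ)) (k:ℤ)) with hSkdef
  set Tk : ℕ → Finset (Fin d → ℤ) := fun k => Sk k ∪ (Sk k).image σ with hTkdef
  have hzj : ∀ k, ∀ z ∈ Sk k, z j = (k:ℤ) := by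
    intro k z hz
    rw [hSkdef, Fintype.mem_piFinset] at hz
    have := hz j
    simpa using this
  have habs : ∀ k, ∀ z ∈ Sk k, ∀ i, |z i| ≤ (k:ℤ) := by
    intro k z hz i
    by_cases hij : i = j
    · subst hij
      rw [hzj k z hz]
      simp
    · rw [hSkdef, Fintype.mem_piFinset] at hz
      have := hz i
      rw [if_neg hij, Finset.mem_Icc] at this
      exact abs_le.mpr this
  have hσj : ∀ k, ∀ z ∈ Sk k, σ z j = -(k:ℤ) := by
    intro k z hz
    simp only [hσdef, if_pos rfl]
    rw [hzj k z hz]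
  have hσabs : ∀ z i, |σ z i| = |z i| := by
    intro z i
    simp only [hσdef]
    split <;> simp
  have hσne : ∀ i, i ≠ j → ∀ z, σ z i = z i := by
    intro i hi z
    simp only [hσdef, if_neg hi]
  have hzne : ∀ k, 1 ≤ k → ∀ z ∈ Sk k, z ≠ 0 := by
    intro k hk z hz h0
    have := hzj k z hz
    rw [h0] at this
    simp at this
    omega
  have hσzne : ∀ k, 1 ≤ k → ∀ z ∈ Sk k, σ z ≠ 0 := by
    intro k hk z hz h0
    have := hσj k z hz
    rw [h0] at this
    simp at this
    omega
  have hznorm : ∀ k, 1 ≤ k → ∀ z ∈ Sk k, ‖z‖ = (k:ℝ) := by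
    intro k hk z hz
    refine le_antisymm (norm_int_vec_le z k (habs k z hz)) ?_
    have h1 : |(z j : ℝ)| ≤ ‖z‖ := norm_int_vec_coord_le z j
    rw [hzj k z hz] at h1
    simpa using h1
  have hσnorm : ∀ k, 1 ≤ k → ∀ z ∈ Sk k, ‖σ z‖ = (k:ℝ) := by
    intro k hk z hz
    refine le_antisymm (norm_int_vec_le _ k (fun i => (hσabs z i).le.trans (habs k z hz i))) ?_
    have h1 : |(σ z j : ℝ)| ≤ ‖σ z‖ := norm_int_vec_coord_le _ j
    rw [hσj k z hz] at h1
    simp only [Int.cast_neg, abs_neg, Int.cast_natCast] at h1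
    simpa using h1
  have hinner : ∀ k, ∀ z ∈ Sk k, (∑ i, (z i : ℝ) * θ i) = (k:ℝ) * θ j + c z := by
    intro k z hz
    rw [← Finset.add_sum_erase Finset.univ (fun i => (z i : ℝ) * θ i) (Finset.mem_univ j),
      hzj k z hz]
    push_cast
    rfl
  have hinnerσ : ∀ k, ∀ z ∈ Sk k, (∑ i, (σ z i : ℝ) * θ i) = -((k:ℝ) * θ j) + c z := by
    intro k z hz
    rw [← Finset.add_sum_erase Finset.univ (fun i => (σ z i : ℝ) * θ i) (Finset.mem_univ j),
      hσj k z hz]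
    have : ∑ i ∈ Finset.univ.erase j, (σ z i : ℝ) * θ i = c z := by
      refine Finset.sum_congr rfl fun i hi => ?_
      rw [hσne i (Finset.ne_of_mem_erase hi) z]
    rw [this]
    push_cast
    ring_nf
  have hdisjT : ∀ k, 1 ≤ k → Disjoint (Sk k) ((Sk k).image σ) := by
    intro k hk
    rw [Finset.disjoint_left]
    intro z hz hz'
    obtain ⟨w, hw, hwz⟩ := Finset.mem_image.mp hz'
    have h1 := hzj k z hz
    have h2 := hσj k w hw
    rw [hwz] at h2
    rw [h1] at h2
    omega
  have shell : ∀ k, 1 ≤ k → k ≤ N → 2/5 * t^2 * (k:ℝ)⁻¹ ≤ ∑ z ∈ Tk k, g z := by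
    intro k hk1 hkN
    have hk0 : (0:ℝ) < (k:ℝ) := by exact_mod_cast hk1
    have hk0' : (1:ℝ) ≤ (k:ℝ) := by exact_mod_cast hk1
    -- pair bound
    have hx : |(k:ℝ) * θ j| ≤ 1/2 := by
      rw [abs_mul, hjt, abs_of_pos hk0]
      calc (k:ℝ) * t ≤ (N:ℝ) * t := by
            have : (k:ℝ) ≤ (N:ℝ) := by exact_mod_cast hkN
            nlinarith
        _ ≤ 1/2 := hNt
    have hpair : ∀ z ∈ Sk k, (k:ℝ)^(-r) * (2 * ((k:ℝ) * t)^2 / 5) ≤ g z + g (σ z) := by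
      intro z hz
      have hgz : g z = (k:ℝ)^(-r) * (1 - Real.cos ((k:ℝ) * θ j + c z)) := by
        simp only [hgdef, FdTerm, if_neg (hzne k hk1 z hz), hznorm k hk1 z hz,
          hinner k z hz]
        rfl
      have hgσz : g (σ z) = (k:ℝ)^(-r) * (1 - Real.cos (-((k:ℝ) * θ j) + c z)) := by
        simp only [hgdef, FdTerm, if_neg (hσzne k hk1 z hz), hσnorm k hk1 z hz,
          hinnerσ k z hz]
        rfl
      rw [hgz, hgσz, ← mul_add]
      refine mul_le_mul_of_nonneg_left ?_ (Real.rpow_nonneg hk0.le _)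
      have hcos2 : Real.cos ((k:ℝ) * θ j + c z) + Real.cos (-((k:ℝ) * θ j) + c z)
          = 2 * Real.cos ((k:ℝ) * θ j) * Real.cos (c z) := by
        have e1 : -((k:ℝ) * θ j) + c z = c z - (k:ℝ) * θ j := by ring
        have e2 : (k:ℝ) * θ j + c z = c z + (k:ℝ) * θ j := by ring
        rw [e1, e2, Real.cos_add, Real.cos_sub]
        ring
      have hcosx : 0 ≤ Real.cos ((k:ℝ) * θ j) := by
        obtain ⟨ha, hb⟩ := abs_le.mp hx
        apply Real.cos_nonneg_of_mem_Icc
        constructor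
        · nlinarith [Real.pi_gt_three]
        · nlinarith [Real.pi_gt_three]
      have hcosc : Real.cos (c z) ≤ 1 := Real.cos_le_one _
      have hcoscge : -1 ≤ Real.cos (c z) := Real.neg_one_le_cos _
      have hlow : ((k:ℝ) * θ j)^2 / 5 ≤ 1 - Real.cos ((k:ℝ) * θ j) :=
        sq_div_five_le_one_sub_cos (hx.trans (by norm_num))
      have hsq : ((k:ℝ) * θ j)^2 = ((k:ℝ) * t)^2 := by
        rw [mul_pow, mul_pow, ← hjt, sq_abs]
      nlinarith [hcosx, hcosc, hlow, hsq]
    -- sum over the shell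
    have hsum1 : ∑ z ∈ Tk k, g z = ∑ z ∈ Sk k, (g z + g (σ z)) := by
      rw [hTkdef]
      rw [Finset.sum_union (hdisjT k hk1), Finset.sum_image (fun a _ b _ h => hσinj h),
        Finset.sum_add_distrib]
    -- cardinality bound
    have hcard : (k:ℕ)^(d-1) ≤ (Sk k).card := by
      rw [hSkdef, Fintype.card_piFinset]
      calc (k:ℕ)^(d-1) = ∏ i, (if i = j then 1 else k) := by
            rw [← Finset.mul_prod_erase Finset.univ _ (Finset.mem_univ j), if_pos rfl, one_mul]
            rw [Finset.prod_congr rfl (fun i hi => if_neg (Finset.ne_of_mem_erase hi)),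
              Finset.prod_const, Finset.card_erase_of_mem (Finset.mem_univ j)]
            simp
        _ ≤ _ := by
            refine Finset.prod_le_prod' fun i _ => ?_
            split
            · simp
            · rw [Int.card_Icc]
              have : ((k:ℤ) + 1 - -(k:ℤ)) = ((2*k+1 : ℕ) : ℤ) := by push_cast; ring
              rw [this, Int.toNat_natCast]
              omega
    have hcardR : (k:ℝ)^((d:ℝ)-1) ≤ ((Sk k).card : ℝ) := by
      have h1 : ((k:ℕ)^(d-1) : ℝ) ≤ ((Sk k).card : ℝ) := by exact_mod_cast hcard
      refine le_trans (le_of_eq ?_) h1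
      rw [← Real.rpow_natCast (k:ℝ) (d-1)]
      congr 1
      rw [Nat.cast_sub hd]
      simp
    have hbound0 : 0 ≤ (k:ℝ)^(-r) * (2 * ((k:ℝ) * t)^2 / 5) := by positivity
    calc 2/5 * t^2 * (k:ℝ)⁻¹ ≤ (k:ℝ)^((d:ℝ)-1) * ((k:ℝ)^(-r) * (2 * ((k:ℝ) * t)^2 / 5)) := by
          have e1 : (k:ℝ)^((d:ℝ)-1) * ((k:ℝ)^(-r) * (2 * ((k:ℝ) * t)^2 / 5))
              = 2/5 * t^2 * (k:ℝ)^(1 - α) := by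
            have e3 : (k:ℝ)^((d:ℝ)-1) * ((k:ℝ)^(-r) * (k:ℝ)^((2:ℝ))) = (k:ℝ)^(1-α) := by
              rw [← Real.rpow_add hk0, ← Real.rpow_add hk0, hrdef]
              congr 1
              ring
            have e2 : ((k:ℝ) * t)^2 = (k:ℝ)^(2:ℝ) * t^2 := by
              rw [mul_pow, ← Real.rpow_natCast (k:ℝ) 2]
              norm_num
            rw [e2]
            calc (k:ℝ)^((d:ℝ)-1) * ((k:ℝ)^(-r) * (2 * ((k:ℝ)^(2:ℝ) * t^2) / 5))
                = (k:ℝ)^((d:ℝ)-1) * ((k:ℝ)^(-r) * (k:ℝ)^(2:ℝ)) * (2 * t^2 / 5) := by ring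
              _ = 2/5 * t^2 * (k:ℝ)^(1 - α) := by rw [e3]; ring
          rw [e1]
          have : (k:ℝ)⁻¹ ≤ (k:ℝ)^(1-α) := by
            rw [← Real.rpow_neg_one]
            exact Real.rpow_le_rpow_of_exponent_le hk0' (by linarith)
          nlinarith [sq_nonneg t, this]
      _ ≤ ((Sk k).card : ℝ) * ((k:ℝ)^(-r) * (2 * ((k:ℝ) * t)^2 / 5)) := by
          exact mul_le_mul_of_nonneg_right hcardR hbound0
      _ ≤ ∑ z ∈ Sk k, (g z + g (σ z)) := by
          have := Finset.card_nsmul_le_sum (Sk k) (fun z => g z + g (σ z))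
            ((k:ℝ)^(-r) * (2 * ((k:ℝ) * t)^2 / 5)) (hpair)
          rwa [nsmul_eq_mul] at this
      _ = ∑ z ∈ Tk k, g z := hsum1.symm
  -- pairwise disjointness of the shells
  have hTabs : ∀ k, ∀ z ∈ Tk k, (z j).natAbs = k := by
    intro k z hz
    rw [hTkdef] at hz
    rcases Finset.mem_union.mp hz with h | h
    · rw [hzj k z h]; simp
    · obtain ⟨w, hw, hwz⟩ := Finset.mem_image.mp h
      have := hσj k w hw
      rw [hwz] at this
      rw [this]
      simp
  have hdisjU : (↑(Finset.Icc 1 N) : Set ℕ).PairwiseDisjoint Tk := by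
    intro k _ k' _ hne
    rw [Function.onFun, Finset.disjoint_left]
    intro z hz hz'
    exact hne ((hTabs k z hz).symm.trans (hTabs k' z hz'))
  have hUnion : ∑ k ∈ Finset.Icc 1 N, ∑ z ∈ Tk k, g z ≤ ∑' z, g z := by
    rw [← Finset.sum_biUnion hdisjU]
    exact Summable.sum_le_tsum _ (fun z _ => FdTerm_nonneg d α z θ) (hsum θ)
  have hharm : 5/2 * K ≤ ∑ k ∈ Finset.Icc 1 N, (k:ℝ)⁻¹ := by
    have h1 := hN₀ N hN₀N
    have h2 : ∑ k ∈ Finset.Icc 1 N, (k:ℝ)⁻¹ = ∑ i ∈ Finset.range N, 1/((i:ℝ)+1) := by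
      rw [← Finset.Ico_add_one_right_eq_Icc, Finset.sum_Ico_eq_sum_range]
      simp only [Nat.add_sub_cancel]
      refine Finset.sum_congr rfl fun i _ => ?_
      rw [one_div]
      push_cast
      ring_nf
    rw [h2]
    exact h1
  calc K * t^2 = 2/5 * t^2 * (5/2 * K) := by ring
    _ ≤ 2/5 * t^2 * ∑ k ∈ Finset.Icc 1 N, (k:ℝ)⁻¹ := by nlinarith [sq_nonneg t, hharm]
    _ = ∑ k ∈ Finset.Icc 1 N, 2/5 * t^2 * (k:ℝ)⁻¹ := Finset.mul_sum _ _ _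
    _ ≤ ∑ k ∈ Finset.Icc 1 N, ∑ z ∈ Tk k, g z :=
        Finset.sum_le_sum fun k hk => shell k (Finset.mem_Icc.mp hk).1 (Finset.mem_Icc.mp hk).2
    _ ≤ ∑' z, g z := hUnion

lemma summable_pi_prod {d : ℕ} (w : ℤ → ℝ) (hw : Summable w) (hw0 : ∀ n, 0 ≤ w n) :
    Summable (fun z : Fin d → ℤ => ∏ i, w (z i)) := by
  induction d with
  | zero => exact .of_finite
  | succ n ih =>
    have h := hw.mul_of_nonneg ih hw0
      (fun z => Finset.prod_nonneg fun i _ => hw0 _)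
    rw [← (Fin.consEquiv (fun _ : Fin (n+1) => ℤ)).summable_iff]
    refine h.congr fun p => ?_
    simp [Fin.prod_univ_succ, Fin.consEquiv]

lemma summable_norm_int_vec_rpow {d : ℕ} (hd : 1 ≤ d) {r : ℝ} (hr : (d : ℝ) < r) :
    Summable (fun z : Fin d → ℤ => ‖z‖ ^ (-r)) := by
  have hd0 : (0:ℝ) < d := by exact_mod_cast hd
  have hr0 : 0 < r := (hd0.trans hr)
  have hrd : 1 < r / d := (one_lt_div hd0).mpr hr
  set p : ℝ := r / d with hp
  have hw : Summable (fun n : ℤ => (1 + |(n:ℝ)|) ^ (-p)) := by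
    refine Summable.of_norm_bounded_eventually (g := fun n : ℤ => |(n:ℝ)| ^ (-p))
      (summable_abs_int_rpow hrd) ?_
    have : {n : ℤ | ¬ ‖(1 + |(n:ℝ)|) ^ (-p)‖ ≤ |(n:ℝ)| ^ (-p)} ⊆ {0} := by
      intro n hn
      simp only [Set.mem_setOf_eq, not_le] at hn
      by_contra h0
      have hne : (0:ℝ) < |(n:ℝ)| := by
        simp only [abs_pos, ne_eq, Int.cast_eq_zero]
        simpa using h0
      have : (1 + |(n:ℝ)|) ^ (-p) ≤ |(n:ℝ)| ^ (-p) :=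
        Real.rpow_le_rpow_of_nonpos hne (by linarith) (by linarith)
      rw [Real.norm_of_nonneg (Real.rpow_nonneg (by positivity) _)] at hn
      linarith
    exact Set.Finite.subset (Set.finite_singleton 0) this
  have hw0 : ∀ n : ℤ, 0 ≤ (1 + |(n:ℝ)|) ^ (-p) := fun n => Real.rpow_nonneg (by positivity) _
  refine Summable.of_nonneg_of_le (fun z => Real.rpow_nonneg (norm_nonneg _) _)
    (fun z => ?_) ((summable_pi_prod _ hw hw0).mul_left ((2:ℝ) ^ r))
  by_cases hz : z = 0
  · subst hz
    rw [norm_zero, Real.zero_rpow (by linarith)]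
    positivity
  · have h1 : (1:ℝ) ≤ ‖z‖ := one_le_norm_int_vec hz
    have hprod : ∏ i, (1 + |(z i : ℝ)|) ≤ (2 * ‖z‖) ^ (d:ℕ) := by
      calc ∏ i, (1 + |(z i : ℝ)|) ≤ ∏ _i : Fin d, (2 * ‖z‖) := by
            refine Finset.prod_le_prod (fun i _ => by positivity) fun i _ => ?_
            have := norm_int_vec_coord_le z i
            linarith
        _ = (2 * ‖z‖) ^ (d:ℕ) := by simp
    have hkey : (2 * ‖z‖) ^ (-r) ≤ ∏ i, (1 + |(z i : ℝ)|) ^ (-p) := by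
      rw [Real.finset_prod_rpow _ _ (fun i _ => by positivity) (-p)]
      have h2 : ((∏ i, (1 + |(z i : ℝ)|)) : ℝ) ^ (-p) ≥ ((2 * ‖z‖) ^ (d:ℕ)) ^ (-p) :=
        Real.rpow_le_rpow_of_nonpos (by positivity) hprod (by simp; positivity)
      calc (2 * ‖z‖) ^ (-r) = ((2 * ‖z‖) ^ (d:ℕ)) ^ (-p) := by
            rw [← Real.rpow_natCast (2 * ‖z‖) d, ← Real.rpow_mul (by positivity)]
            congr 1
            rw [hp]
            field_simp
          _ ≤ _ := h2
    have h2r : (2 * ‖z‖) ^ (-r) = 2 ^ (-r) * ‖z‖ ^ (-r) :=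
      Real.mul_rpow (by norm_num) (by positivity)
    have := mul_le_mul_of_nonneg_left hkey (le_of_lt (Real.rpow_pos_of_pos two_pos r))
    rw [h2r, ← mul_assoc, ← Real.rpow_add two_pos, add_neg_cancel, Real.rpow_zero, one_mul]
      at this
    exact this

lemma one_sub_cos_nonneg (x : ℝ) : 0 ≤ 1 - Real.cos x := by
  linarith [Real.cos_le_one x]

lemma one_sub_cos_le_two (x : ℝ) : 1 - Real.cos x ≤ 2 := by
  linarith [Real.neg_one_le_cos x]

lemma summable_FdTerm (d : ℕ) (hd : 1 ≤ d) (α : ℝ) (hα0 : 0 < α) (θ : Fin d → ℝ) :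
    Summable (fun z : Fin d → ℤ => FdTerm d α z θ) := by
  have hrd : (d:ℝ) < (d:ℝ) + α := by linarith
  refine Summable.of_nonneg_of_le (fun z => FdTerm_nonneg d α z θ) (fun z => ?_)
    ((summable_norm_int_vec_rpow hd hrd).mul_left 2)
  unfold FdTerm
  split
  · positivity
  · have h1 : 0 ≤ ‖z‖ ^ (-((d : ℝ) + α)) := Real.rpow_nonneg (norm_nonneg _) _
    have := one_sub_cos_le_two (∑ i, (z i : ℝ) * θ i)
    nlinarith

lemma abs_inner_le {d : ℕ} (z : Fin d → ℤ) (θ : Fin d → ℝ) :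
    |∑ i, (z i : ℝ) * θ i| ≤ (d : ℝ) * (‖z‖ * ‖θ‖) := by
  calc |∑ i, (z i : ℝ) * θ i| ≤ ∑ i, |(z i : ℝ) * θ i| := Finset.abs_sum_le_sum_abs _ _
    _ ≤ ∑ _i : Fin d, ‖z‖ * ‖θ‖ := by
        refine Finset.sum_le_sum fun i _ => ?_
        rw [abs_mul]
        have h1 := norm_int_vec_coord_le z i
        have h2 : |θ i| ≤ ‖θ‖ := by
          simpa [Real.norm_eq_abs] using norm_le_pi_norm θ i
        have := abs_nonneg ((z i : ℝ))
        have := abs_nonneg (θ i)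
        nlinarith [norm_nonneg z, norm_nonneg θ]
    _ = (d : ℝ) * (‖z‖ * ‖θ‖) := by simp [Finset.sum_const, mul_comm]

theorem F_asymptotically_Fd (d : ℕ) (hd : 1 ≤ d) (α : ℝ) (hα0 : 0 < α) (hα2 : α ≤ 2)
    (a : (Fin d → ℤ) → ℝ) (ha : ∀ z, 0 ≤ a z)
    (hlim : Filter.Tendsto (fun z : Fin d → ℤ => a z * ‖z‖ ^ ((d : ℝ) + α))
      Filter.cofinite (nhds 1)) :
    Filter.Tendsto
      (fun θ : Fin d → ℝ =>
        (∑' z : Fin d → ℤ,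
          if z = 0 then 0 else a z * (1 - Real.cos (∑ i, (z i : ℝ) * θ i))) /
          ∑' z : Fin d → ℤ, FdTerm d α z θ)
      (nhdsWithin 0 {(0 : Fin d → ℝ)}ᶜ) (nhds 1) := by
  have hd0 : (0:ℝ) < d := by exact_mod_cast hd
  set r : ℝ := (d:ℝ) + α with hrdef
  have hrd : (d:ℝ) < r := by rw [hrdef]; linarith
  have hr0 : 0 < r := hd0.trans hrd
  have hgsum : ∀ θ : Fin d → ℝ, Summable (fun z => FdTerm d α z θ) :=
    fun θ => summable_FdTerm d hd α hα0 θ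
  set f : (Fin d → ℝ) → (Fin d → ℤ) → ℝ :=
    fun θ z => if z = 0 then 0 else a z * (1 - Real.cos (∑ i, (z i : ℝ) * θ i)) with hfdef
  have hf0 : ∀ θ z, 0 ≤ f θ z := by
    intro θ z
    rw [hfdef]
    dsimp only
    split
    · exact le_refl 0
    · exact mul_nonneg (ha z) (one_sub_cos_nonneg _)
  have hfsum : ∀ θ, Summable (f θ) := by
    intro θ
    have h1 : ∀ᶠ z : Fin d → ℤ in cofinite, dist (a z * ‖z‖ ^ r) 1 < 1 :=
      Metric.tendsto_nhds.mp hlim 1 one_pos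
    have h2 : ∀ᶠ z : Fin d → ℤ in cofinite, ‖f θ z‖ ≤ 4 * ‖z‖ ^ (-r) := by
      filter_upwards [h1, Filter.eventually_cofinite_ne (0 : Fin d → ℤ)] with z h1z h0z
      have hn : (0:ℝ) < ‖z‖ := lt_of_lt_of_le one_pos (one_le_norm_int_vec h0z)
      have hcancel : ‖z‖ ^ r * ‖z‖ ^ (-r) = 1 := by
        rw [← Real.rpow_add hn]; simp
      rw [Real.dist_eq] at h1z
      have haz : a z * ‖z‖ ^ r ≤ 2 := by
        have := abs_le.mp h1z.le
        linarith [this.2]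
      have haz2 : a z ≤ 2 * ‖z‖ ^ (-r) := by
        have h3 : a z * (‖z‖ ^ r * ‖z‖ ^ (-r)) ≤ 2 * ‖z‖ ^ (-r) := by
          rw [← mul_assoc]
          exact mul_le_mul_of_nonneg_right haz (Real.rpow_nonneg hn.le _)
        rwa [hcancel, mul_one] at h3
      rw [hfdef]
      simp only [if_neg h0z]
      rw [Real.norm_eq_abs, abs_of_nonneg (mul_nonneg (ha z) (one_sub_cos_nonneg _))]
      have := one_sub_cos_le_two (∑ i, (z i : ℝ) * θ i)
      have := one_sub_cos_nonneg (∑ i, (z i : ℝ) * θ i)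
      nlinarith [ha z, Real.rpow_nonneg hn.le (-r)]
    exact Summable.of_norm_bounded_eventually
      ((summable_norm_int_vec_rpow hd hrd).mul_left 4) h2
  rw [Metric.tendsto_nhds]
  intro ε hε
  set ε1 : ℝ := min (ε/3) (1/2) with hε1def
  have hε10 : 0 < ε1 := lt_min (by linarith) (by norm_num)
  have hε112 : ε1 ≤ 1/2 := min_le_right _ _
  have hε13 : ε1 ≤ ε/3 := min_le_left _ _
  have hE : {z : Fin d → ℤ | ¬ dist (a z * ‖z‖ ^ r) 1 < ε1}.Finite := by
    have := Metric.tendsto_nhds.mp hlim ε1 hε10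
    rwa [Filter.eventually_cofinite] at this
  set E := hE.toFinset with hEdef
  have hnotE : ∀ z ∉ E, |a z * ‖z‖ ^ r - 1| < ε1 := by
    intro z hz
    rw [hEdef, Set.Finite.mem_toFinset, Set.mem_setOf_eq, not_not] at hz
    rwa [Real.dist_eq] at hz
  have hz0 : ∀ z : Fin d → ℤ, z ∉ E → z ≠ 0 := by
    intro z hz h0
    have h1 := hnotE z hz
    rw [h0] at h1
    rw [norm_zero, Real.zero_rpow (ne_of_gt hr0), mul_zero] at h1
    rw [abs_sub_comm] at h1
    rw [sub_zero, abs_one] at h1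
    linarith
  have hkey : ∀ z ∉ E, |a z - ‖z‖ ^ (-r)| ≤ ε1 * ‖z‖ ^ (-r) := by
    intro z hz
    have hz0' := hz0 z hz
    have hn : (0:ℝ) < ‖z‖ := lt_of_lt_of_le one_pos (one_le_norm_int_vec hz0')
    have hcancel : ‖z‖ ^ r * ‖z‖ ^ (-r) = 1 := by
      rw [← Real.rpow_add hn]; simp
    have heq : |a z - ‖z‖ ^ (-r)| = |a z * ‖z‖ ^ r - 1| * ‖z‖ ^ (-r) := by
      have h5 : (a z * ‖z‖ ^ r - 1) * ‖z‖ ^ (-r) = a z - ‖z‖ ^ (-r) := by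
        rw [sub_mul, mul_assoc, hcancel, mul_one, one_mul]
      rw [← h5, abs_mul, abs_of_nonneg (Real.rpow_nonneg hn.le (-r))]
    rw [heq]
    exact mul_le_mul_of_nonneg_right (hnotE z hz).le (Real.rpow_nonneg hn.le _)
  set C : ℝ := ∑ z ∈ E, (a z + ‖z‖ ^ (-r)) * ((d:ℝ) * ‖z‖)^2 / 2 with hCdef
  have hC0 : 0 ≤ C := by
    refine Finset.sum_nonneg fun z _ => ?_
    have := ha z
    have := Real.rpow_nonneg (norm_nonneg z) (-r)
    positivity
  -- the key difference bound
  have hdiff : ∀ θ : Fin d → ℝ,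
      |(∑' z, f θ z) - ∑' z, FdTerm d α z θ|
        ≤ C * ‖θ‖^2 + ε1 * ∑' z, FdTerm d α z θ := by
    intro θ
    have hgs := hgsum θ
    have hfs := hfsum θ
    have hsub : Summable (fun z => f θ z - FdTerm d α z θ) := hfs.sub hgs
    rw [← Summable.tsum_sub hfs hgs]
    have habs : |∑' z, (f θ z - FdTerm d α z θ)| ≤ ∑' z, |f θ z - FdTerm d α z θ| := by
      have h := norm_tsum_le_tsum_norm (f := fun z => f θ z - FdTerm d α z θ)
        (by simpa [Real.norm_eq_abs] using hsub.abs)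
      simpa [Real.norm_eq_abs] using h
    refine habs.trans ?_
    set B1 : (Fin d → ℤ) → ℝ :=
      fun z => if z ∈ E then (a z + ‖z‖ ^ (-r)) * ((d:ℝ) * ‖z‖)^2 / 2 * ‖θ‖^2 else 0 with hB1def
    have hB1sum : Summable B1 := summable_of_ne_finset_zero (s := E) (fun z hz => if_neg hz)
    have hple : ∀ z, |f θ z - FdTerm d α z θ| ≤ B1 z + ε1 * FdTerm d α z θ := by
      intro z
      have hg0 := FdTerm_nonneg d α z θ
      by_cases h0 : z = 0
      · subst h0
        have hB10 : 0 ≤ B1 0 := by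
          rw [hB1def]
          dsimp only
          split
          · have h2 : (0:ℝ) ≤ ‖(0 : Fin d → ℤ)‖ ^ (-r) := Real.rpow_nonneg (norm_nonneg _) _
            exact mul_nonneg (div_nonneg (mul_nonneg (add_nonneg (ha 0) h2) (sq_nonneg _))
              (by norm_num)) (sq_nonneg _)
          · exact le_refl 0
        have hf00 : f θ 0 = 0 := by simp [hfdef]
        have hg00 : FdTerm d α (0 : Fin d → ℤ) θ = 0 := by rw [FdTerm, if_pos rfl]
        rw [hf00, hg00, sub_zero, abs_zero, mul_zero, add_zero]
        exact hB10
      · have hn : (0:ℝ) < ‖z‖ := lt_of_lt_of_le one_pos (one_le_norm_int_vec h0)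
        set s : ℝ := ∑ i, (z i : ℝ) * θ i with hsdef
        have hfz : f θ z = a z * (1 - Real.cos s) := by rw [hfdef]; simp only [if_neg h0]; rfl
        have hgz : FdTerm d α z θ = ‖z‖ ^ (-r) * (1 - Real.cos s) := by
          simp only [FdTerm, if_neg h0]
          rfl
        have hdiffz : f θ z - FdTerm d α z θ = (a z - ‖z‖ ^ (-r)) * (1 - Real.cos s) := by
          rw [hfz, hgz]; ring
        rw [hdiffz, abs_mul, abs_of_nonneg (one_sub_cos_nonneg s)]
        by_cases hzE : z ∈ E
        · have h1 : |a z - ‖z‖ ^ (-r)| ≤ a z + ‖z‖ ^ (-r) := by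
            refine (abs_sub _ _).trans ?_
            rw [abs_of_nonneg (ha z), abs_of_nonneg (Real.rpow_nonneg hn.le _)]
          have h2 : 1 - Real.cos s ≤ ((d:ℝ) * (‖z‖ * ‖θ‖))^2 / 2 := by
            refine (one_sub_cos_le s).trans ?_
            have h3 := abs_inner_le z θ
            rw [← hsdef] at h3
            have h4 : s^2 ≤ ((d:ℝ) * (‖z‖ * ‖θ‖))^2 := by
              rw [← sq_abs s]
              exact pow_le_pow_left₀ (abs_nonneg s) h3 2
            linarith
          have hB1z : B1 z = (a z + ‖z‖ ^ (-r)) * ((d:ℝ) * ‖z‖)^2 / 2 * ‖θ‖^2 := by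
            rw [hB1def]; simp only [if_pos hzE]
          rw [hB1z]
          have hab : 0 ≤ a z + ‖z‖ ^ (-r) := by
            have := ha z
            have := Real.rpow_nonneg hn.le (-r)
            linarith
          have h5 : |a z - ‖z‖ ^ (-r)| * (1 - Real.cos s)
              ≤ (a z + ‖z‖ ^ (-r)) * (((d:ℝ) * (‖z‖ * ‖θ‖))^2 / 2) := by
            have := one_sub_cos_nonneg s
            nlinarith [abs_nonneg (a z - ‖z‖ ^ (-r))]
          refine h5.trans ?_
          have he : (a z + ‖z‖ ^ (-r)) * (((d:ℝ) * (‖z‖ * ‖θ‖))^2 / 2)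
              = (a z + ‖z‖ ^ (-r)) * ((d:ℝ) * ‖z‖)^2 / 2 * ‖θ‖^2 := by ring
          rw [he]
          nlinarith [hε10, hg0]
        · have hB1z : B1 z = 0 := by rw [hB1def]; simp only [if_neg hzE]
          rw [hB1z, zero_add, hgz]
          have h1 := hkey z hzE
          have := one_sub_cos_nonneg s
          nlinarith [abs_nonneg (a z - ‖z‖ ^ (-r)), Real.rpow_nonneg hn.le (-r)]
    have hBsum : Summable (fun z => B1 z + ε1 * FdTerm d α z θ) :=
      hB1sum.add (hgs.mul_left ε1)
    have habs2 : Summable (fun z => |f θ z - FdTerm d α z θ|) := hsub.abs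
    refine (Summable.tsum_le_tsum hple habs2 hBsum).trans ?_
    rw [Summable.tsum_add hB1sum (hgs.mul_left ε1), tsum_mul_left]
    have hB1tsum : ∑' z, B1 z = C * ‖θ‖^2 := by
      rw [tsum_eq_sum (s := E) (fun z hz => by rw [hB1def]; simp only [if_neg hz])]
      rw [hCdef, Finset.sum_mul]
      refine Finset.sum_congr rfl fun z hz => ?_
      rw [hB1def]
      simp only [if_pos hz]
    rw [hB1tsum]
  -- choose δ from the lower bound
  obtain ⟨δ, hδ0, hδ⟩ := Fd_lower d hd α hα0 hα2 hgsum (C/ε1 + 1) (by positivity)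
  have hev1 : ∀ᶠ θ : Fin d → ℝ in nhdsWithin 0 {(0 : Fin d → ℝ)}ᶜ, ‖θ‖ < δ := by
    have h1 : Metric.ball (0 : Fin d → ℝ) δ ∈ nhds (0 : Fin d → ℝ) := Metric.ball_mem_nhds _ hδ0
    filter_upwards [nhdsWithin_le_nhds h1] with θ hθ
    rwa [Metric.mem_ball, dist_zero_right] at hθ
  have hev2 : ∀ᶠ θ : Fin d → ℝ in nhdsWithin 0 {(0 : Fin d → ℝ)}ᶜ, θ ≠ 0 := by
    filter_upwards [self_mem_nhdsWithin] with θ hθ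
    exact hθ
  filter_upwards [hev1, hev2] with θ h1 h2
  have hG := hδ θ h2 h1
  have hθn : 0 < ‖θ‖ := norm_pos_iff.mpr h2
  have hGpos : 0 < ∑' z, FdTerm d α z θ := by
    refine lt_of_lt_of_le ?_ hG
    positivity
  have hCb : C * ‖θ‖^2 ≤ ε1 * ∑' z, FdTerm d α z θ := by
    have he : ε1 * ((C/ε1 + 1) * ‖θ‖^2) = (C + ε1) * ‖θ‖^2 := by
      field_simp
    have h3 : C * ‖θ‖^2 ≤ ε1 * ((C/ε1 + 1) * ‖θ‖^2) := by
      rw [he]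
      nlinarith [sq_nonneg ‖θ‖]
    refine h3.trans ?_
    exact mul_le_mul_of_nonneg_left hG hε10.le
  have hd2 := hdiff θ
  rw [Real.dist_eq]
  have hne : (∑' z, FdTerm d α z θ) ≠ 0 := ne_of_gt hGpos
  rw [show (∑' z : Fin d → ℤ, f θ z) / (∑' z, FdTerm d α z θ) - 1
      = ((∑' z, f θ z) - ∑' z, FdTerm d α z θ) / (∑' z, FdTerm d α z θ) from by
    field_simp]
  rw [abs_div, abs_of_pos hGpos, div_lt_iff₀ hGpos]
  have h4 := mul_pos hε hGpos
  nlinarith [hd2, hCb, hGpos, mul_le_mul_of_nonneg_right hε13 hGpos.le]
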